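/- In the setting of the construction of V₀(ξ) = sup_{u} sup_{t≥0} { (α(|x(t,ξ,u)|) − ∫₀^t γ₁(|y(s,ξ,u)|) ds − ∫₀^∞ 2γ̃₂(|u(s)|) ds)·k(t) }, for any input u with ∫₀^∞ γ̃₂(|u(s)|) ds > β(|ξ|, 0), the quantity inside the supremum is ≤ 0 for all t ≥ 0. Consequently, since V₀(ξ) ≥ 0, the supremum over inputs may be restricted to the set U(|ξ|) := { u : ∫₀^∞ γ̃₂(|u(s)|) ds ≤ β(|ξ|, 0) } without changing V₀(ξ). -/
import Mathlib


open MeasureTheory Set Filter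

noncomputable section

/-- Class `K` function: continuous, strictly increasing, zero at zero (on `[0,∞)`). -/
def ClassK (f : ℝ → ℝ) : Prop :=
  ContinuousOn f (Set.Ici 0) ∧ StrictMonoOn f (Set.Ici 0) ∧ f 0 = 0 ∧
    ∀ s, 0 ≤ s → 0 ≤ f s

/-- Class `K∞` function: class `K` and unbounded. -/
def ClassKinf (f : ℝ → ℝ) : Prop :=
  ClassK f ∧ ∀ M : ℝ, ∃ s, 0 ≤ s ∧ M < f s

/-- Class `L` function: continuous, strictly decreasing, positive, tending to `0` at `∞`. -/
def ClassL (f : ℝ → ℝ) : Prop :=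
  ContinuousOn f (Set.Ici 0) ∧ StrictAntiOn f (Set.Ici 0) ∧
    (∀ s, 0 ≤ s → 0 < f s) ∧ Filter.Tendsto f Filter.atTop (nhds 0)

/-- Class `KL` function. -/
def ClassKL (β : ℝ → ℝ → ℝ) : Prop :=
  (∀ t, 0 ≤ t → ClassK (fun s => β s t)) ∧
  ∀ s, 0 ≤ s → ContinuousOn (β s) (Set.Ici 0) ∧ AntitoneOn (β s) (Set.Ici 0) ∧
    Filter.Tendsto (β s) Filter.atTop (nhds 0)

/-- Positive definite function on `[0,∞)`. -/
def PosDef (κ : ℝ → ℝ) : Prop := κ 0 = 0 ∧ ∀ s, 0 < s → 0 < κ s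
abbrev Vec (n : ℕ) := EuclideanSpace ℝ (Fin n)

/-- Admissible input: measurable and locally essentially bounded. -/
def Adm {m : ℕ} (u : ℝ → Vec m) : Prop :=
  Measurable u ∧ ∀ T : ℝ, 0 < T → ∃ C, ∀ᵐ s ∂volume, s ∈ Set.Icc (0 : ℝ) T → ‖u s‖ ≤ C

/-- (Carathéodory) solution on `[0,∞)` of `ẋ = f(x,u)`, `x(0) = ξ`, in integral form. -/
def IsSol {n m : ℕ} (f : Vec n → Vec m → Vec n) (u : ℝ → Vec m) (ξ : Vec n)
    (x : ℝ → Vec n) : Prop :=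
  ContinuousOn x (Set.Ici 0) ∧ x 0 = ξ ∧
    ∀ t, 0 ≤ t → x t = ξ + ∫ s in (0 : ℝ)..t, f (x s) (u s)

/-- `f` jointly continuous and locally Lipschitz in `x` uniformly in `u`. -/
def RegularRHS {n m : ℕ} (f : Vec n → Vec m → Vec n) : Prop :=
  Continuous (fun p : Vec n × Vec m => f p.1 p.2) ∧
  ∀ K : Set (Vec n), IsCompact K → ∃ L, 0 ≤ L ∧
    ∀ μ : Vec m, ∀ a ∈ K, ∀ b ∈ K, ‖f a μ - f b μ‖ ≤ L * ‖a - b‖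

/-- Forward completeness: every initial state and admissible input yield a global solution. -/
def ForwardComplete {n m : ℕ} (f : Vec n → Vec m → Vec n) : Prop :=
  ∀ (ξ : Vec n) (u : ℝ → Vec m), Adm u → ∃ x, IsSol f u ξ x

open scoped ENNReal in
/-- The set of values whose supremum defines `V₀(ξ)`:
`(α(|x(t,ξ,u)|) - ∫₀ᵗ γ₁(|y|) - ∫₀^∞ 2 γ̃₂(|u|)) · k(t)` over admissible inputs `u`
(with `γ̃₂(|u(·)|)` integrable on `(0,∞)`), solutions `x`, and times `t ≥ 0`. -/
def Vset {n m q : ℕ} (f : Vec n → Vec m → Vec n) (h : Vec n → Vec q)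
    (α γ₁ γ₂t k : ℝ → ℝ) (ξ : Vec n) : Set ℝ :=
  {z | ∃ (u : ℝ → Vec m) (x : ℝ → Vec n) (t : ℝ), Adm u ∧
    MeasureTheory.IntegrableOn (fun s => γ₂t ‖u s‖) (Set.Ioi 0) ∧ IsSol f u ξ x ∧ 0 ≤ t ∧
    z = (α ‖x t‖ - (∫ s in (0 : ℝ)..t, γ₁ ‖h (x s)‖)
          - 2 * ∫ s in Set.Ioi (0 : ℝ), γ₂t ‖u s‖) * k t}

/-- As `Vset`, but with the inputs restricted to
`U(|ξ|) = {u : ∫₀^∞ γ̃₂(|u(s)|) ds ≤ β(|ξ|, 0)}`. -/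
def VsetR {n m q : ℕ} (f : Vec n → Vec m → Vec n) (h : Vec n → Vec q)
    (α : ℝ → ℝ) (β : ℝ → ℝ → ℝ) (γ₁ γ₂t k : ℝ → ℝ) (ξ : Vec n) : Set ℝ :=
  {z | ∃ (u : ℝ → Vec m) (x : ℝ → Vec n) (t : ℝ), Adm u ∧
    MeasureTheory.IntegrableOn (fun s => γ₂t ‖u s‖) (Set.Ioi 0) ∧
    (∫ s in Set.Ioi (0 : ℝ), γ₂t ‖u s‖) ≤ β ‖ξ‖ 0 ∧ IsSol f u ξ x ∧ 0 ≤ t ∧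
    z = (α ‖x t‖ - (∫ s in (0 : ℝ)..t, γ₁ ‖h (x s)‖)
          - 2 * ∫ s in Set.Ioi (0 : ℝ), γ₂t ‖u s‖) * k t}

/-- if `∫₀^∞ γ̃₂(|u|) > β(|ξ|, 0)`, the quantity inside the supremum defining
`V₀(ξ)` is `≤ 0` for all `t ≥ 0`; consequently, since `V₀(ξ) ≥ 0`, the supremum may be
restricted to inputs in `U(|ξ|)` without changing its value. -/
theorem stmt15 {n m q : ℕ} (f : Vec n → Vec m → Vec n) (h : Vec n → Vec q)
    (hf : RegularRHS f) (hf0 : f 0 0 = 0) (hh : LocallyLipschitz h) (hh0 : h 0 = 0)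
    (hfc : ForwardComplete f)
    (α β γ₁ γ₂t : _) (hα : ClassKinf α) (hβ : ClassKL β) (hγ₁ : ClassK γ₁)
    (hγ₂ : ClassK γ₂t)
    (k : ℝ → ℝ) (hkc : Continuous k) (c₁ c₂ : ℝ) (hc₁ : 0 < c₁)
    (hk : ∀ t, 0 ≤ t → k t ∈ Set.Icc c₁ c₂)
    (hioss : ∀ (ξ : Vec n) (u : ℝ → Vec m) (x : ℝ → Vec n), Adm u →
      MeasureTheory.IntegrableOn (fun s => γ₂t ‖u s‖) (Set.Ioi 0) → IsSol f u ξ x →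
      ∀ t, 0 ≤ t → α ‖x t‖ ≤ β ‖ξ‖ 0 + (∫ s in (0 : ℝ)..t, γ₁ ‖h (x s)‖)
        + ∫ s in Set.Ioi (0 : ℝ), γ₂t ‖u s‖) :
    ∀ ξ : Vec n,
      (∀ (u : ℝ → Vec m) (x : ℝ → Vec n), Adm u →
        MeasureTheory.IntegrableOn (fun s => γ₂t ‖u s‖) (Set.Ioi 0) → IsSol f u ξ x →
        β ‖ξ‖ 0 < (∫ s in Set.Ioi (0 : ℝ), γ₂t ‖u s‖) →
        ∀ t, 0 ≤ t →
          (α ‖x t‖ - (∫ s in (0 : ℝ)..t, γ₁ ‖h (x s)‖)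
            - 2 * ∫ s in Set.Ioi (0 : ℝ), γ₂t ‖u s‖) * k t ≤ 0) ∧
      sSup (Vset f h α γ₁ γ₂t k ξ) = sSup (VsetR f h α β γ₁ γ₂t k ξ) := by
  intro ξ
  have hkpos : ∀ t, 0 ≤ t → 0 < k t := fun t ht => lt_of_lt_of_le hc₁ (hk t ht).1
  have hInn : ∀ (u : ℝ → Vec m), (0:ℝ) ≤ ∫ s in Set.Ioi (0:ℝ), γ₂t ‖u s‖ := by
    intro u
    exact setIntegral_nonneg measurableSet_Ioi fun s _ => hγ₂.2.2.2 _ (norm_nonneg _)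
  have part1 : ∀ (u : ℝ → Vec m) (x : ℝ → Vec n), Adm u →
      MeasureTheory.IntegrableOn (fun s => γ₂t ‖u s‖) (Set.Ioi 0) → IsSol f u ξ x →
      β ‖ξ‖ 0 < (∫ s in Set.Ioi (0 : ℝ), γ₂t ‖u s‖) →
      ∀ t, 0 ≤ t →
        (α ‖x t‖ - (∫ s in (0 : ℝ)..t, γ₁ ‖h (x s)‖)
          - 2 * ∫ s in Set.Ioi (0 : ℝ), γ₂t ‖u s‖) * k t ≤ 0 := by
    intro u x hu hint hsol hI t ht
    have h1 := hioss ξ u x hu hint hsol t ht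
    have hb : α ‖x t‖ - (∫ s in (0 : ℝ)..t, γ₁ ‖h (x s)‖)
        - 2 * ∫ s in Set.Ioi (0 : ℝ), γ₂t ‖u s‖ ≤ 0 := by linarith
    exact mul_nonpos_of_nonpos_of_nonneg hb (hkpos t ht).le
  refine ⟨part1, ?_⟩
  -- witness element with zero input at t = 0
  have admz : Adm (fun _ : ℝ => (0 : Vec m)) :=
    ⟨measurable_const, fun T _ => ⟨0, Filter.Eventually.of_forall fun s _ => by simp⟩⟩
  obtain ⟨x₀, hx₀⟩ := hfc ξ _ admz
  have hintz : MeasureTheory.IntegrableOn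
      (fun s : ℝ => γ₂t ‖(fun _ : ℝ => (0 : Vec m)) s‖) (Set.Ioi 0) := by
    simp only [norm_zero, hγ₂.2.2.1]
    exact integrableOn_zero
  have hIz : (∫ s in Set.Ioi (0:ℝ), γ₂t ‖(fun _ : ℝ => (0 : Vec m)) s‖) = 0 := by
    simp [hγ₂.2.2.1]
  have hβnn : 0 ≤ β ‖ξ‖ 0 := (hβ.1 0 le_rfl).2.2.2 ‖ξ‖ (norm_nonneg ξ)
  have hz₀mem : (α ‖ξ‖) * k 0 ∈ VsetR f h α β γ₁ γ₂t k ξ := by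
    refine ⟨_, x₀, 0, admz, hintz, by rw [hIz]; exact hβnn, hx₀, le_rfl, ?_⟩
    rw [hIz, hx₀.2.1, intervalIntegral.integral_same]
    ring
  have hz₀nn : 0 ≤ (α ‖ξ‖) * k 0 :=
    mul_nonneg (hα.1.2.2.2 _ (norm_nonneg ξ)) (hkpos 0 le_rfl).le
  have hsub : VsetR f h α β γ₁ γ₂t k ξ ⊆ Vset f h α γ₁ γ₂t k ξ := by
    rintro z ⟨u, x, t, hu, hint, _, hsol, ht, hz⟩
    exact ⟨u, x, t, hu, hint, hsol, ht, hz⟩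
  have hneV : (Vset f h α γ₁ γ₂t k ξ).Nonempty := ⟨_, hsub hz₀mem⟩
  have hneR : (VsetR f h α β γ₁ γ₂t k ξ).Nonempty := ⟨_, hz₀mem⟩
  have hc₂nn : 0 ≤ c₂ := le_trans hc₁.le (le_trans (hk 0 le_rfl).1 (hk 0 le_rfl).2)
  have hbdd : BddAbove (Vset f h α γ₁ γ₂t k ξ) := by
    refine ⟨β ‖ξ‖ 0 * c₂, ?_⟩
    rintro z ⟨u, x, t, hu, hint, hsol, ht, rfl⟩
    have h1 := hioss ξ u x hu hint hsol t ht
    have hI := hInn u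
    set b := α ‖x t‖ - (∫ s in (0 : ℝ)..t, γ₁ ‖h (x s)‖)
        - 2 * ∫ s in Set.Ioi (0 : ℝ), γ₂t ‖u s‖ with hbdef
    have hbβ : b ≤ β ‖ξ‖ 0 := by rw [hbdef]; linarith
    rcases le_or_gt b 0 with hb0 | hb0
    · exact le_trans (mul_nonpos_of_nonpos_of_nonneg hb0 (hkpos t ht).le)
        (mul_nonneg hβnn hc₂nn)
    · exact mul_le_mul hbβ (hk t ht).2 (hkpos t ht).le hβnn
  have hbddR : BddAbove (VsetR f h α β γ₁ γ₂t k ξ) := hbdd.mono hsub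
  refine le_antisymm ?_ (csSup_le_csSup hbdd hneR hsub)
  apply csSup_le hneV
  rintro z ⟨u, x, t, hu, hint, hsol, ht, rfl⟩
  rcases le_or_gt (∫ s in Set.Ioi (0:ℝ), γ₂t ‖u s‖) (β ‖ξ‖ 0) with hle | hgt
  · exact le_csSup hbddR ⟨u, x, t, hu, hint, hle, hsol, ht, rfl⟩
  · exact le_trans (part1 u x hu hint hsol hgt t ht)
      (le_trans hz₀nn (le_csSup hbddR hz₀mem))
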